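/- arXiv:0808.1298 — 2 statements merged into one kernel-verified Lean document; each statement's English description precedes it below -/
import Mathlib

section
/- Let (X,τ) be a compact Hausdorff space and d a semi metric on X with τ_d weaker than τ. Let ρ be the semi metric on the state space S(C(X,ℂ)) given by ρ(μ,ν) = sup{ |μ(a) − ν(a)| : a ∈ C(X,ℂ), |a(p) − a(q)| ≤ d(p,q) for all p,q ∈ X }, and for b ∈ C(X,ℂ) let L_ρ(b) = sup{ |μ(b) − ν(b)|/ρ(μ,ν) : μ,ν ∈ S(C(X,ℂ)), ρ(μ,ν) ≠ 0 } ∈ [0,∞]. Then for every b ∈ C(X,ℂ) that is also continuous with respect to τ_d, L_ρ(b) = ‖b‖_d, where ‖b‖_d is the Lipschitz seminorm of b with respect to d (equality in [0,∞]). -/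
open scoped ENNReal

noncomputable section

variable {X : Type*} [TopologicalSpace X]

/-- A state on the C*-algebra `C(X, ℂ)`: a continuous linear functional sending the unit to `1`
and taking nonnegative real values on positive elements `star a * a`. -/
def IsState (φ : C(X, ℂ) →L[ℂ] ℂ) : Prop :=
  φ 1 = 1 ∧ ∀ a : C(X, ℂ), 0 ≤ (φ (star a * a)).re ∧ (φ (star a * a)).im = 0

/-- The Monge–Kantorovich semi metric `ρ` on functionals on `C(X, ℂ)` associated with a semi
metric `d` on `X`: `ρ(μ, ν) = sup { |μ a - ν a| : a ∈ C(X, ℂ), |a p - a q| ≤ d p q ∀ p q }`,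
with values in `[0, ∞]`. -/
def rho (d : X → X → ℝ) (μ ν : C(X, ℂ) →L[ℂ] ℂ) : ℝ≥0∞ :=
  ⨆ a ∈ {a : C(X, ℂ) | ∀ p q : X, ‖a p - a q‖ ≤ d p q}, (‖μ a - ν a‖₊ : ℝ≥0∞)

/-- The Lipschitz-type seminorm `L_ρ` on `C(X, ℂ)` induced by the semi metric `ρ` on the state
space: `L_ρ(b) = sup { |μ b - ν b| / ρ(μ, ν) : μ, ν states, ρ(μ, ν) ≠ 0 } ∈ [0, ∞]`. -/
def Lrho (d : X → X → ℝ) (b : C(X, ℂ)) : ℝ≥0∞ :=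
  ⨆ (μ : {φ : C(X, ℂ) →L[ℂ] ℂ // IsState φ}) (ν : {φ : C(X, ℂ) →L[ℂ] ℂ // IsState φ})
    (_ : rho d μ.1 ν.1 ≠ 0), (‖μ.1 b - ν.1 b‖₊ : ℝ≥0∞) / rho d μ.1 ν.1

/-- The Lipschitz seminorm `‖b‖_d` of `b : C(X, ℂ)` with respect to a semi metric `d` on `X`,
with values in `[0, ∞]`. -/
def lipSeminorm (d : X → X → ℝ) (b : C(X, ℂ)) : ℝ≥0∞ :=
  ⨆ (x : X) (y : X) (_ : d x y ≠ 0), (‖b x - b y‖₊ : ℝ≥0∞) / ENNReal.ofReal (d x y)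

lemma ofReal_norm_eq_coe_nnnorm {E : Type*} [SeminormedAddGroup E] (a : E) :
    ENNReal.ofReal ‖a‖ = (‖a‖₊ : ℝ≥0∞) := ofReal_norm a

/-- Evaluation at a point as a continuous linear functional on `C(X, ℂ)`. -/
def evalSt (x : X) : C(X, ℂ) →L[ℂ] ℂ :=
  { toFun := fun a => a x
    map_add' := fun _ _ => rfl
    map_smul' := fun _ _ => rfl
    cont := continuous_eval_const x }

lemma isState_evalSt (x : X) : IsState (evalSt x) := by
  refine ⟨rfl, fun a => ?_⟩
  have h : evalSt x (star a * a) = (starRingEnd ℂ) (a x) * a x := by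
    simp [evalSt, Complex.star_def]
  rw [h]
  constructor
  · simp [Complex.mul_re]; nlinarith [sq_nonneg (a x).re, sq_nonneg (a x).im]
  · simp [Complex.mul_im]; ring

/-- Let `(X, τ)` be compact Hausdorff and `d` a semi metric on `X` whose
induced topology is weaker than `τ`.  Then for every `b ∈ C(X, ℂ)` that is moreover continuous
with respect to the topology induced by `d`, the seminorm `L_ρ(b)` defined from the
Monge–Kantorovich semi metric `ρ` on the state space equals the Lipschitz seminorm `‖b‖_d`
(equality in `[0, ∞]`). -/
theorem Lrho_eq_lipSeminorm [CompactSpace X] [T2Space X] (d : X → X → ℝ)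
    (d_nonneg : ∀ x y, 0 ≤ d x y)
    (d_refl : ∀ x, d x x = 0)
    (d_symm : ∀ x y, d x y = d y x)
    (d_triangle : ∀ x y z, d x z ≤ d x y + d y z)
    (hweaker : ∀ (x : X) (ε : ℝ), 0 < ε →
      ∃ U : Set X, IsOpen U ∧ x ∈ U ∧ ∀ y ∈ U, d x y < ε)
    (b : C(X, ℂ))
    (hbd : ∀ (x : X) (ε : ℝ), 0 < ε → ∃ δ > 0, ∀ y : X, d y x < δ → ‖b y - b x‖ < ε) :
    Lrho d b = lipSeminorm d b := by
  -- auxiliary : |d x p - d x q| ≤ d p q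
  have dlip : ∀ x p q : X, |d x p - d x q| ≤ d p q := by
    intro x p q
    rw [abs_sub_le_iff]
    constructor
    · have := d_triangle x q p; rw [d_symm q p] at this; linarith
    · have := d_triangle x p q; linarith
  -- zero distance implies equal values of b
  have hb0 : ∀ p q : X, d p q = 0 → b p = b q := by
    intro p q hpq
    by_contra hne
    have hpos : 0 < ‖b p - b q‖ := by
      simpa [sub_eq_zero] using norm_pos_iff.mpr (sub_ne_zero.mpr hne)
    obtain ⟨δ, hδ, hδ'⟩ := hbd q _ hpos
    exact absurd (hδ' p (by rw [hpq]; exact hδ)) (lt_irrefl _)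
  apply le_antisymm
  · -- Lrho ≤ lipSeminorm
    set L := lipSeminorm d b with hL
    refine iSup₂_le fun μ ν => iSup_le fun hρ => ?_
    rcases eq_or_ne L ⊤ with hLtop | hLtop
    · rw [hLtop]; exact le_top
    -- Lipschitz bound for b
    have hLip : ∀ p q : X, ‖b p - b q‖ ≤ L.toReal * d p q := by
      intro p q
      rcases eq_or_ne (d p q) 0 with h0 | h0
      · rw [h0, mul_zero, hb0 p q h0, sub_self, norm_zero]
      · have hterm : (‖b p - b q‖₊ : ℝ≥0∞) / ENNReal.ofReal (d p q) ≤ L := by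
          rw [hL, lipSeminorm]
          exact le_iSup₂_of_le p q (le_iSup_of_le h0 le_rfl)
        have hd : ENNReal.ofReal (d p q) ≠ 0 := by
          simp [ENNReal.ofReal_eq_zero, not_le, lt_of_le_of_ne (d_nonneg p q) (Ne.symm h0)]
        have hmul : (‖b p - b q‖₊ : ℝ≥0∞) ≤ L * ENNReal.ofReal (d p q) := by
          rw [← ENNReal.div_le_iff hd ENNReal.ofReal_ne_top]
          exact hterm
        have := ENNReal.toReal_mono (by
          exact ENNReal.mul_ne_top hLtop ENNReal.ofReal_ne_top) hmul
        rwa [ENNReal.toReal_mul, ENNReal.coe_toReal, coe_nnnorm,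
          ENNReal.toReal_ofReal (d_nonneg p q)] at this
    rcases eq_or_ne L 0 with hL0 | hL0
    · -- b is constant, so μ b = ν b
      have hXne : Nonempty X := by
        by_contra hX
        have h1 : (1 : C(X, ℂ)) = 0 := by
          ext x; exact absurd ⟨x⟩ hX
        have := μ.2.1
        rw [h1, map_zero] at this
        exact one_ne_zero this.symm
      obtain ⟨x₀⟩ := hXne
      have hbc : b = (b x₀) • (1 : C(X, ℂ)) := by
        ext p
        have : ‖b p - b x₀‖ ≤ 0 := by
          have := hLip p x₀; rw [hL0] at this; simpa using this
        have := le_antisymm this (norm_nonneg _)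
        simpa [sub_eq_zero, ContinuousMap.smul_apply] using norm_eq_zero.mp this
      have hμ : μ.1 b = b x₀ := by rw [hbc, map_smul, μ.2.1]; simp
      have hν : ν.1 b = b x₀ := by rw [hbc, map_smul, ν.2.1]; simp
      rw [hμ, hν, sub_self]
      simp
    -- main case : 0 < L < ⊤
    have htpos : 0 < L.toReal := ENNReal.toReal_pos hL0 hLtop
    set t := L.toReal with ht
    set c : ℂ := ((t⁻¹ : ℝ) : ℂ) with hc
    have ha : (c • b) ∈ {a : C(X, ℂ) | ∀ p q : X, ‖a p - a q‖ ≤ d p q} := by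
      intro p q
      have : ‖(c • b) p - (c • b) q‖ = t⁻¹ * ‖b p - b q‖ := by
        have h1 : (c • b) p - (c • b) q = c * (b p - b q) := by
          simp [ContinuousMap.smul_apply, smul_eq_mul]; ring
        rw [h1, norm_mul, hc, Complex.norm_real, Real.norm_eq_abs,
          abs_of_pos (inv_pos.mpr htpos)]
      rw [this]
      calc t⁻¹ * ‖b p - b q‖ ≤ t⁻¹ * (t * d p q) := by
            exact mul_le_mul_of_nonneg_left (hLip p q) (inv_pos.mpr htpos).le
        _ = d p q := by field_simp
    have hρge : (‖μ.1 (c • b) - ν.1 (c • b)‖₊ : ℝ≥0∞) ≤ rho d μ.1 ν.1 :=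
      le_iSup₂_of_le (c • b) ha le_rfl
    have hval : (‖μ.1 (c • b) - ν.1 (c • b)‖₊ : ℝ≥0∞)
        = ENNReal.ofReal t⁻¹ * (‖μ.1 b - ν.1 b‖₊ : ℝ≥0∞) := by
      rw [map_smul, map_smul, ← smul_sub]
      rw [← ofReal_norm_eq_coe_nnnorm, ← ofReal_norm_eq_coe_nnnorm, norm_smul,
        ENNReal.ofReal_mul (norm_nonneg c)]
      congr 1
      simp [hc, abs_of_pos htpos]
    have hLeq : L = ENNReal.ofReal t := (ENNReal.ofReal_toReal hLtop).symm
    have hmain : (‖μ.1 b - ν.1 b‖₊ : ℝ≥0∞) ≤ L * rho d μ.1 ν.1 := by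
      calc (‖μ.1 b - ν.1 b‖₊ : ℝ≥0∞)
          = L * (ENNReal.ofReal t⁻¹ * (‖μ.1 b - ν.1 b‖₊ : ℝ≥0∞)) := by
            rw [← mul_assoc, hLeq, ← ENNReal.ofReal_mul htpos.le,
              mul_inv_cancel₀ (ne_of_gt htpos), ENNReal.ofReal_one, one_mul]
        _ = L * (‖μ.1 (c • b) - ν.1 (c • b)‖₊ : ℝ≥0∞) := by rw [hval]
        _ ≤ L * rho d μ.1 ν.1 := mul_le_mul_right hρge _
    exact ENNReal.div_le_of_le_mul hmain
  · -- lipSeminorm ≤ Lrho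
    refine iSup₂_le fun x y => iSup_le fun hxy => ?_
    have hdpos : 0 < d x y := lt_of_le_of_ne (d_nonneg x y) (Ne.symm hxy)
    -- the continuous function p ↦ d x p
    have hcont : Continuous fun p : X => ((d x p : ℝ) : ℂ) := by
      refine Complex.continuous_ofReal.comp ?_
      rw [continuous_iff_continuousAt]
      intro p
      rw [ContinuousAt, Metric.tendsto_nhds]
      intro ε hε
      obtain ⟨U, hU, hpU, hUd⟩ := hweaker p ε hε
      filter_upwards [hU.mem_nhds hpU] with q hq
      rw [Real.dist_eq]
      exact lt_of_le_of_lt (by rw [abs_sub_comm]; exact dlip x p q) (hUd q hq)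
    set a : C(X, ℂ) := ⟨fun p => ((d x p : ℝ) : ℂ), hcont⟩ with haa
    have haS : a ∈ {a : C(X, ℂ) | ∀ p q : X, ‖a p - a q‖ ≤ d p q} := by
      intro p q
      have : a p - a q = (((d x p - d x q : ℝ)) : ℂ) := by
        simp only [haa, ContinuousMap.coe_mk]; push_cast; ring
      rw [this, Complex.norm_real]
      exact dlip x p q
    -- rho between evaluation states equals ofReal (d x y)
    have hρeq : rho d (evalSt x) (evalSt y) = ENNReal.ofReal (d x y) := by
      apply le_antisymm
      · refine iSup₂_le fun f hf => ?_
        rw [← ofReal_norm_eq_coe_nnnorm]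
        exact ENNReal.ofReal_le_ofReal (hf x y)
      · refine le_iSup₂_of_le a haS ?_
        have : evalSt x a - evalSt y a = -((d x y : ℝ) : ℂ) := by
          simp [evalSt, haa, d_refl]
        rw [← ofReal_norm_eq_coe_nnnorm, this]
        simp [abs_of_nonneg (d_nonneg x y)]
    have hρne : rho d (evalSt x) (evalSt y) ≠ 0 := by
      rw [hρeq]; simp [ENNReal.ofReal_eq_zero, not_le, hdpos]
    calc (‖b x - b y‖₊ : ℝ≥0∞) / ENNReal.ofReal (d x y)
        = (‖(evalSt x) b - (evalSt y) b‖₊ : ℝ≥0∞) / rho d (evalSt x) (evalSt y) := by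
          rw [hρeq]; rfl
      _ ≤ Lrho d b := by
          rw [Lrho]
          exact le_iSup₂_of_le ⟨evalSt x, isState_evalSt x⟩ ⟨evalSt y, isState_evalSt y⟩
            (le_iSup_of_le hρne le_rfl)


end
end

section
/- Let (X,τ) be a compact Hausdorff space and d a semi metric on X with τ_d weaker than τ. Let ρ be the semi metric on S(C(X,ℂ)) given by ρ(μ,ν) = sup{ |μ(a) − ν(a)| : a ∈ C(X,ℂ), |a(p) − a(q)| ≤ d(p,q) for all p,q ∈ X }. Then for a ∈ C(X,ℂ), the following are equivalent: (1) a is continuous with respect to τ_d; (2) the map ν ↦ ν(a) on S(C(X,ℂ)) is continuous with respect to ρ, i.e., for every state ν and every ε > 0 there is δ > 0 such that every state ν' with ρ(ν',ν) < δ satisfies |ν'(a) − ν(a)| < ε. -/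
open scoped ENNReal

noncomputable section

variable {X : Type*} [TopologicalSpace X]

/-- Embedding of a real continuous map into `C(X, ℂ)`. -/
def CMreal (h : C(X, ℝ)) : C(X, ℂ) :=
  ⟨fun x => (h x : ℂ), Complex.continuous_ofReal.comp h.continuous⟩

lemma CMreal_apply (h : C(X, ℝ)) (x : X) : CMreal h x = (h x : ℂ) := rfl

lemma state_nonneg (φ : C(X, ℂ) →L[ℂ] ℂ) (hφ : IsState φ) (k : C(X, ℝ))
    (hk : ∀ x, 0 ≤ k x) : 0 ≤ (φ (CMreal k)).re ∧ (φ (CMreal k)).im = 0 := by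
  set s : C(X, ℝ) := ⟨fun x => Real.sqrt (k x), (Real.continuous_sqrt).comp k.continuous⟩
  have hs : star (CMreal s) * (CMreal s) = CMreal k := by
    ext x
    simp only [ContinuousMap.mul_apply, ContinuousMap.star_apply, CMreal_apply]
    rw [Complex.star_def, Complex.conj_ofReal, ← Complex.ofReal_mul,
      show s x * s x = k x from Real.mul_self_sqrt (hk x)]
  have := hφ.2 (CMreal s)
  rwa [hs] at this

lemma state_real_bound (φ : C(X, ℂ) →L[ℂ] ℂ) (hφ : IsState φ) (h : C(X, ℝ)) (C : ℝ)
    (hC : ∀ x, |h x| ≤ C) : ‖φ (CMreal h)‖ ≤ C := by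
  have h1 := state_nonneg φ hφ (ContinuousMap.const X C - h)
    (fun x => by
      have := (hC x)
      simp only [ContinuousMap.sub_apply, ContinuousMap.const_apply]
      linarith [(abs_le.1 this).2])
  have h2 := state_nonneg φ hφ (ContinuousMap.const X C + h)
    (fun x => by
      have := (hC x)
      simp only [ContinuousMap.add_apply, ContinuousMap.const_apply]
      linarith [(abs_le.1 this).1])
  have e1 : CMreal (ContinuousMap.const X C - h) = (C : ℂ) • (1 : C(X, ℂ)) - CMreal h := by
    ext x; simp [CMreal_apply, Complex.ofReal_sub]
  have e2 : CMreal (ContinuousMap.const X C + h) = (C : ℂ) • (1 : C(X, ℂ)) + CMreal h := by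
    ext x; simp [CMreal_apply, Complex.ofReal_add]
  rw [e1, map_sub, map_smul, hφ.1, smul_eq_mul, mul_one] at h1
  rw [e2, map_add, map_smul, hφ.1, smul_eq_mul, mul_one] at h2
  have him : (φ (CMreal h)).im = 0 := by
    have := h1.2
    simp only [Complex.sub_im, Complex.ofReal_im] at this
    linarith
  have hre1 : (φ (CMreal h)).re ≤ C := by
    have := h1.1
    simp only [Complex.sub_re, Complex.ofReal_re] at this
    linarith
  have hre2 : -C ≤ (φ (CMreal h)).re := by
    have := h2.1
    simp only [Complex.add_re, Complex.ofReal_re] at this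
    linarith
  have : φ (CMreal h) = ((φ (CMreal h)).re : ℂ) := Complex.ext rfl (by simp [him])
  rw [this, Complex.norm_real]
  exact abs_le.2 ⟨hre2, hre1⟩

lemma unif_cont [CompactSpace X] (d : X → X → ℝ)
    (d_symm : ∀ x y, d x y = d y x) (d_triangle : ∀ x y z, d x z ≤ d x y + d y z)
    (hweaker : ∀ (x : X) (ε : ℝ), 0 < ε →
      ∃ U : Set X, IsOpen U ∧ x ∈ U ∧ ∀ y ∈ U, d x y < ε)
    (a : C(X, ℂ))
    (hd : ∀ (x : X) (ε : ℝ), 0 < ε → ∃ δ > 0, ∀ y : X, d y x < δ → ‖a y - a x‖ < ε)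
    (ε : ℝ) (hε : 0 < ε) : ∃ δ > 0, ∀ x y : X, d x y < δ → ‖a x - a y‖ < ε := by
  choose δ hδpos hδ using fun x => hd x (ε/2) (by linarith)
  choose U hUopen hxU hU using fun x => hweaker x (δ x / 2) (half_pos (hδpos x))
  obtain ⟨t, ht⟩ := IsCompact.elim_finite_subcover isCompact_univ U hUopen
    (fun x _ => Set.mem_iUnion.2 ⟨x, hxU x⟩)
  by_cases hne : t.Nonempty
  · refine ⟨t.inf' hne (fun i => δ i / 2), ?_, ?_⟩
    · exact (Finset.lt_inf'_iff hne).2 fun i _ => half_pos (hδpos i)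
    · intro x y hxy
      obtain ⟨i, hit, hxUi⟩ := Set.mem_iUnion₂.1 (ht (Set.mem_univ x))
      have hδ₀ : t.inf' hne (fun i => δ i / 2) ≤ δ i / 2 := Finset.inf'_le _ hit
      have h1 : d i x < δ i / 2 := hU i x hxUi
      have h2 : ‖a x - a i‖ < ε / 2 := hδ i x (by
        have := hδpos i; rw [d_symm x i]; linarith)
      have h3 : d y i < δ i := by
        have := d_triangle y x i
        rw [d_symm y x, d_symm x i] at *
        linarith
      have h4 : ‖a y - a i‖ < ε / 2 := hδ i y h3
      calc ‖a x - a y‖ ≤ ‖a x - a i‖ + ‖a i - a y‖ := norm_sub_le_norm_sub_add_norm_sub _ _ _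
        _ < ε/2 + ε/2 := by rw [norm_sub_rev (a i)]; exact add_lt_add h2 h4
        _ = ε := by ring
  · refine ⟨1, one_pos, fun x y _ => absurd (ht (Set.mem_univ x)) ?_⟩
    simp [Finset.not_nonempty_iff_eq_empty.1 hne]

lemma lip_approx [CompactSpace X] (d : X → X → ℝ)
    (d_nonneg : ∀ x y, 0 ≤ d x y) (d_refl : ∀ x, d x x = 0)
    (d_symm : ∀ x y, d x y = d y x) (d_triangle : ∀ x y z, d x z ≤ d x y + d y z)
    (hweaker : ∀ (x : X) (ε : ℝ), 0 < ε →
      ∃ U : Set X, IsOpen U ∧ x ∈ U ∧ ∀ y ∈ U, d x y < ε)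
    (f : C(X, ℝ))
    (hf : ∀ ε : ℝ, 0 < ε → ∃ δ > 0, ∀ x y : X, d x y < δ → |f x - f y| < ε)
    (ε : ℝ) (hε : 0 < ε) :
    ∃ (L : ℝ) (g : C(X, ℝ)), 0 < L ∧ (∀ p q, |g p - g q| ≤ L * d p q) ∧
      ∀ x, 0 ≤ f x - g x ∧ f x - g x ≤ ε := by
  cases isEmpty_or_nonempty X with
  | inl h => exact ⟨1, 0, one_pos, fun p => (IsEmpty.false p).elim, fun x => (IsEmpty.false x).elim⟩
  | inr hne =>
  obtain ⟨δ₀, hδ₀, hδ⟩ := hf ε hε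
  set M := ‖f‖ with hM
  have hMb : ∀ x, |f x| ≤ M := fun x => by
    simpa using f.norm_coe_le_norm x
  have hM0 : 0 ≤ M := norm_nonneg f
  set L := 2 * M / δ₀ + 1 with hL
  have hL0 : 0 < L := by positivity
  set G : X → ℝ := fun x => ⨅ y, (f y + L * d x y) with hG
  have hGdef : ∀ x, G x = ⨅ y, (f y + L * d x y) := fun _ => rfl
  have hbdd : ∀ x : X, BddBelow (Set.range fun y => f y + L * d x y) := by
    intro x
    refine ⟨-M, Set.forall_mem_range.2 fun y => ?_⟩
    have := (abs_le.1 (hMb y)).1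
    nlinarith [d_nonneg x y, hL0.le]
  have hGle : ∀ x, G x ≤ f x := by
    intro x
    have h := ciInf_le (hbdd x) x
    rw [d_refl x, mul_zero, add_zero] at h
    rw [hGdef x]
    exact h
  have hGge : ∀ x, f x - ε ≤ G x := by
    intro x
    rw [hGdef x]
    refine le_ciInf fun y => ?_
    by_cases hxy : d x y < δ₀
    · have := hδ x y hxy
      nlinarith [d_nonneg x y, hL0.le, (abs_lt.1 this).2]
    · push_neg at hxy
      have h5 : L * δ₀ ≤ L * d x y := mul_le_mul_of_nonneg_left hxy hL0.le
      have h6 : L * δ₀ = 2 * M + δ₀ := by rw [hL]; field_simp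
      have := (abs_le.1 (hMb y)).1
      have := (abs_le.1 (hMb x)).2
      linarith
  have hlip : ∀ p q, |G p - G q| ≤ L * d p q := by
    have key : ∀ p q, G p ≤ G q + L * d p q := by
      intro p q
      have step : ∀ y, G p - L * d p q ≤ f y + L * d q y := by
        intro y
        have h1 : G p ≤ f y + L * d p y := by rw [hGdef p]; exact ciInf_le (hbdd p) y
        have h2 : d p y ≤ d p q + d q y := d_triangle p q y
        nlinarith [hL0.le]
      have h3 : G p - L * d p q ≤ G q := by rw [hGdef q]; exact le_ciInf step
      linarith
    intro p q
    rw [abs_sub_le_iff]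
    constructor
    · linarith [key p q]
    · have := key q p
      rw [d_symm q p] at this
      linarith
  have hcont : Continuous G := by
    rw [continuous_iff_continuousAt]
    intro x
    rw [ContinuousAt, Metric.tendsto_nhds]
    intro ε' hε'
    obtain ⟨U, hUopen, hxU, hU⟩ := hweaker x (ε' / L) (by positivity)
    refine Filter.eventually_of_mem (hUopen.mem_nhds hxU) fun y hy => ?_
    rw [Real.dist_eq]
    calc |G y - G x| ≤ L * d y x := hlip y x
      _ = L * d x y := by rw [d_symm]
      _ < L * (ε' / L) := mul_lt_mul_of_pos_left (hU y hy) hL0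
      _ = ε' := by field_simp
  refine ⟨L, ⟨G, hcont⟩, hL0, fun p q => hlip p q, fun x => ⟨?_, ?_⟩⟩
  · show 0 ≤ f x - G x
    linarith [hGle x]
  · show f x - G x ≤ ε
    linarith [hGge x]

lemma rho_lt_of (d : X → X → ℝ) {ν ν' : C(X,ℂ) →L[ℂ] ℂ} {δ : ℝ} (hδ : 0 < δ)
    (h : rho d ν' ν < ENNReal.ofReal δ) (b : C(X,ℂ)) (hb : ∀ p q, ‖b p - b q‖ ≤ d p q) :
    ‖ν' b - ν b‖ < δ := by
  have h1 : (‖ν' b - ν b‖₊ : ℝ≥0∞) ≤ rho d ν' ν :=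
    le_iSup₂ (f := fun a (_ : a ∈ {a : C(X, ℂ) | ∀ p q : X, ‖a p - a q‖ ≤ d p q}) =>
      ((‖ν' a - ν a‖₊ : ℝ≥0∞))) b hb
  have h2 := lt_of_le_of_lt h1 h
  rw [← enorm_eq_nnnorm, ← ofReal_norm] at h2
  exact (ENNReal.ofReal_lt_ofReal_iff hδ).1 h2

/-- The evaluation functional at a point. -/
def evalF [CompactSpace X] (p : X) : C(X, ℂ) →L[ℂ] ℂ :=
  LinearMap.mkContinuous
    { toFun := fun f => f p
      map_add' := fun _ _ => rfl
      map_smul' := fun _ _ => rfl } 1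
    (fun f => by simpa using f.norm_coe_le_norm p)

lemma evalF_apply [CompactSpace X] (p : X) (f : C(X, ℂ)) : evalF p f = f p := rfl

lemma eval_isState [CompactSpace X] (p : X) : IsState (evalF p) := by
  constructor
  · rfl
  · intro b
    show 0 ≤ ((star b * b) p).re ∧ ((star b * b) p).im = 0
    have he : (star b * b) p = (starRingEnd ℂ) (b p) * (b p) := rfl
    rw [he]
    constructor
    · simp [Complex.mul_re]
      nlinarith [sq_nonneg (b p).re, sq_nonneg (b p).im]
    · simp [Complex.mul_im]
      ring

/-- Let `(X, τ)` be compact Hausdorff and `d` a semi metric on `X` whose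
induced topology is weaker than `τ`, and let `ρ` be the induced Monge–Kantorovich semi metric
on the state space of `C(X, ℂ)`.  Then for `a ∈ C(X, ℂ)` the following are equivalent:
(1) `a` is continuous with respect to the topology induced by `d`;
(2) the map `ν ↦ ν a` on states is continuous with respect to `ρ`. -/
theorem continuous_d_iff_continuous_rho [CompactSpace X] [T2Space X] (d : X → X → ℝ)
    (d_nonneg : ∀ x y, 0 ≤ d x y)
    (d_refl : ∀ x, d x x = 0)
    (d_symm : ∀ x y, d x y = d y x)
    (d_triangle : ∀ x y z, d x z ≤ d x y + d y z)
    (hweaker : ∀ (x : X) (ε : ℝ), 0 < ε →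
      ∃ U : Set X, IsOpen U ∧ x ∈ U ∧ ∀ y ∈ U, d x y < ε)
    (a : C(X, ℂ)) :
    (∀ (x : X) (ε : ℝ), 0 < ε → ∃ δ > 0, ∀ y : X, d y x < δ → ‖a y - a x‖ < ε) ↔
      (∀ ν : C(X, ℂ) →L[ℂ] ℂ, IsState ν → ∀ ε : ℝ, 0 < ε → ∃ δ : ℝ, 0 < δ ∧
        ∀ ν' : C(X, ℂ) →L[ℂ] ℂ, IsState ν' →
          rho d ν' ν < ENNReal.ofReal δ → ‖ν' a - ν a‖ < ε) := by
  constructor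
  · -- forward direction
    intro hd ν hν ε hε
    set f : C(X, ℝ) := ⟨fun x => (a x).re, Complex.continuous_re.comp a.continuous⟩ with hfdef
    set g : C(X, ℝ) := ⟨fun x => (a x).im, Complex.continuous_im.comp a.continuous⟩ with hgdef
    have hfu : ∀ ε' : ℝ, 0 < ε' → ∃ δ > 0, ∀ x y : X, d x y < δ → |f x - f y| < ε' := by
      intro ε' hε'
      obtain ⟨δ, hδpos, hδ⟩ := unif_cont d d_symm d_triangle hweaker a hd ε' hε'
      refine ⟨δ, hδpos, fun x y hxy => lt_of_le_of_lt ?_ (hδ x y hxy)⟩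
      have : f x - f y = (a x - a y).re := by simp [hfdef]
      rw [this]
      exact Complex.abs_re_le_norm _
    have hgu : ∀ ε' : ℝ, 0 < ε' → ∃ δ > 0, ∀ x y : X, d x y < δ → |g x - g y| < ε' := by
      intro ε' hε'
      obtain ⟨δ, hδpos, hδ⟩ := unif_cont d d_symm d_triangle hweaker a hd ε' hε'
      refine ⟨δ, hδpos, fun x y hxy => lt_of_le_of_lt ?_ (hδ x y hxy)⟩
      have : g x - g y = (a x - a y).im := by simp [hgdef]
      rw [this]
      exact Complex.abs_im_le_norm _
    obtain ⟨L₁, F, hL₁, hFlip, hFa⟩ :=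
      lip_approx d d_nonneg d_refl d_symm d_triangle hweaker f hfu (ε/8) (by linarith)
    obtain ⟨L₂, G, hL₂, hGlip, hGa⟩ :=
      lip_approx d d_nonneg d_refl d_symm d_triangle hweaker g hgu (ε/8) (by linarith)
    set δ := ε/8/(L₁ + L₂) with hδdef
    have hδpos : 0 < δ := by positivity
    refine ⟨δ, hδpos, fun ν' hν' hρ => ?_⟩
    -- the normalized Lipschitz elements
    have hb : ∀ (L : ℝ) (hL : 0 < L) (F : C(X, ℝ)) (hF : ∀ p q, |F p - F q| ≤ L * d p q),
        ‖ν' (CMreal F) - ν (CMreal F)‖ < L * δ := by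
      intro L hL F hF
      obtain ⟨b, hbdef⟩ : ∃ b : C(X, ℂ), b = (L⁻¹ : ℂ) • CMreal F := ⟨_, rfl⟩
      have hmem : ∀ p q, ‖b p - b q‖ ≤ d p q := by
        intro p q
        have e : b p - b q = ((L⁻¹ * (F p - F q) : ℝ) : ℂ) := by
          rw [hbdef]
          simp only [ContinuousMap.smul_apply, CMreal_apply, smul_eq_mul]
          push_cast
          ring
        rw [e, Complex.norm_real, Real.norm_eq_abs, abs_mul, abs_inv, abs_of_pos hL]
        rw [inv_mul_le_iff₀ hL]
        exact hF p q
      have hkey := rho_lt_of d hδpos hρ b hmem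
      have hLne : (L : ℂ) ≠ 0 := Complex.ofReal_ne_zero.2 hL.ne'
      have hsub : ν' (CMreal F) - ν (CMreal F) = (L : ℂ) * (ν' b - ν b) := by
        rw [hbdef, map_smul, map_smul, smul_eq_mul, smul_eq_mul]
        field_simp
      rw [hsub, norm_mul, Complex.norm_real, Real.norm_eq_abs, abs_of_pos hL]
      exact mul_lt_mul_of_pos_left hkey hL
    have hF1 := hb L₁ hL₁ F hFlip
    have hG1 := hb L₂ hL₂ G hGlip
    -- approximation bounds
    have hFsmall : ∀ (μ : C(X, ℂ) →L[ℂ] ℂ), IsState μ → ‖μ (CMreal (f - F))‖ ≤ ε/8 := by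
      intro μ hμ
      refine state_real_bound μ hμ _ _ fun x => ?_
      have := hFa x
      rw [abs_le]
      constructor <;> simp only [ContinuousMap.sub_apply] <;> linarith [this.1, this.2]
    have hGsmall : ∀ (μ : C(X, ℂ) →L[ℂ] ℂ), IsState μ → ‖μ (CMreal (g - G))‖ ≤ ε/8 := by
      intro μ hμ
      refine state_real_bound μ hμ _ _ fun x => ?_
      have := hGa x
      rw [abs_le]
      constructor <;> simp only [ContinuousMap.sub_apply] <;> linarith [this.1, this.2]
    -- decompose a
    have ha : a = (CMreal (f - F) + CMreal F) + Complex.I • (CMreal (g - G) + CMreal G) := by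
      ext x
      simp only [ContinuousMap.add_apply, ContinuousMap.smul_apply, CMreal_apply,
        ContinuousMap.sub_apply, smul_eq_mul, Complex.ofReal_sub]
      have hri : (f x : ℂ) + Complex.I * (g x : ℂ) = a x := by
        rw [show (f x : ℝ) = (a x).re from rfl, show (g x : ℝ) = (a x).im from rfl, mul_comm]
        exact Complex.re_add_im (a x)
      linear_combination (-1 : ℂ) * hri
    have hdec : ν' a - ν a =
        ((ν' (CMreal (f - F)) - ν (CMreal (f - F))) + (ν' (CMreal F) - ν (CMreal F)))
        + Complex.I * ((ν' (CMreal (g - G)) - ν (CMreal (g - G))) + (ν' (CMreal G) - ν (CMreal G))) := by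
      conv_lhs => rw [ha]
      simp only [ContinuousLinearMap.map_add, ContinuousLinearMap.map_smul, map_add, map_smul,
        smul_eq_mul]
      ring
    have hδsum : (L₁ + L₂) * δ = ε/8 := by
      rw [hδdef]; field_simp
    calc ‖ν' a - ν a‖
        = ‖((ν' (CMreal (f - F)) - ν (CMreal (f - F))) + (ν' (CMreal F) - ν (CMreal F)))
          + Complex.I * ((ν' (CMreal (g - G)) - ν (CMreal (g - G))) + (ν' (CMreal G) - ν (CMreal G)))‖ := by
          rw [hdec]
      _ ≤ ‖(ν' (CMreal (f - F)) - ν (CMreal (f - F))) + (ν' (CMreal F) - ν (CMreal F))‖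
          + ‖Complex.I * ((ν' (CMreal (g - G)) - ν (CMreal (g - G))) + (ν' (CMreal G) - ν (CMreal G)))‖ :=
          norm_add_le _ _
      _ ≤ (‖ν' (CMreal (f - F))‖ + ‖ν (CMreal (f - F))‖ + ‖ν' (CMreal F) - ν (CMreal F)‖)
          + (‖ν' (CMreal (g - G))‖ + ‖ν (CMreal (g - G))‖ + ‖ν' (CMreal G) - ν (CMreal G)‖) := by
          rw [norm_mul, Complex.norm_I, one_mul]
          have t1 : ‖(ν' (CMreal (f - F)) - ν (CMreal (f - F))) + (ν' (CMreal F) - ν (CMreal F))‖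
              ≤ ‖ν' (CMreal (f - F))‖ + ‖ν (CMreal (f - F))‖ + ‖ν' (CMreal F) - ν (CMreal F)‖ :=
            le_trans (norm_add_le _ _) (by gcongr; exact norm_sub_le _ _)
          have t2 : ‖(ν' (CMreal (g - G)) - ν (CMreal (g - G))) + (ν' (CMreal G) - ν (CMreal G))‖
              ≤ ‖ν' (CMreal (g - G))‖ + ‖ν (CMreal (g - G))‖ + ‖ν' (CMreal G) - ν (CMreal G)‖ :=
            le_trans (norm_add_le _ _) (by gcongr; exact norm_sub_le _ _)
          exact add_le_add t1 t2
      _ < (ε/8 + ε/8 + L₁ * δ) + (ε/8 + ε/8 + L₂ * δ) := by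
          exact add_lt_add
            (add_lt_add_of_le_of_lt (add_le_add (hFsmall ν' hν') (hFsmall ν hν)) hF1)
            (add_lt_add_of_le_of_lt (add_le_add (hGsmall ν' hν') (hGsmall ν hν)) hG1)
      _ = ε/2 + (L₁ + L₂) * δ := by ring
      _ = ε/2 + ε/8 := by rw [hδsum]
      _ < ε := by linarith
  · -- reverse direction
    intro h2 x ε hε
    obtain ⟨δ, hδ, hball⟩ := h2 _ (eval_isState x) ε hε
    refine ⟨δ, hδ, fun y hy => ?_⟩
    have hρ : rho d (evalF y) (evalF x) < ENNReal.ofReal δ := by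
      have hle : rho d (evalF y) (evalF x) ≤ ENNReal.ofReal (d y x) := by
        refine iSup₂_le fun b hb => ?_
        rw [← enorm_eq_nnnorm, ← ofReal_norm]
        rw [show evalF y b = b y from rfl, show evalF x b = b x from rfl]
        exact ENNReal.ofReal_le_ofReal (hb y x)
      exact lt_of_le_of_lt hle ((ENNReal.ofReal_lt_ofReal_iff hδ).2 hy)
    have := hball _ (eval_isState y) hρ
    rwa [evalF_apply, evalF_apply] at this

end
end
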